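/- Under consistency, unconfoundedness, exclusion restriction for both potential outcomes, and positivity, the differential-effect contrast satisfies μ1 := E[Y|Z1=1,Z2=0] − E[Y|Z1=0,Z2=1] = τ + h(1,0) − h(0,1), where τ = E[Y(1) − Y(0)] and h(a,b) = E[f_a(X,U) | Z1=a, Z2=b] with f_a(X,U) = E[Y(a)|X,U] − E[Y(a)]. -/

import Mathlib

open MeasureTheory ProbabilityTheory
open scoped ENNReal NNReal

/-- Conditional mean of `f` given the event `A`: `E[f | A]`. -/
noncomputable def condMeanOn {Ω : Type*} [MeasurableSpace Ω]
    (μ : Measure Ω) (A : Set Ω) (f : Ω → ℝ) : ℝ :=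
  (∫ ω in A, f ω ∂μ) / (μ A).toReal

/-- The σ-algebra generated by two real-valued functions, e.g. `σ(X, U)`. -/
def sigma2 {Ω : Type*} (f g : Ω → ℝ) : MeasurableSpace Ω :=
  MeasurableSpace.comap f inferInstance ⊔ MeasurableSpace.comap g inferInstance

/-- The σ-algebra generated by three real-valued functions, e.g. `σ(Z2, X, U)`. -/
def sigma3 {Ω : Type*} (f g h : Ω → ℝ) : MeasurableSpace Ω :=
  MeasurableSpace.comap f inferInstance ⊔ MeasurableSpace.comap g inferInstance
    ⊔ MeasurableSpace.comap h inferInstance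

lemma pullout_integral {Ω : Type*} {m : MeasurableSpace Ω} {mΩ : MeasurableSpace Ω}
    (hm : m ≤ mΩ) (μ : Measure Ω) [IsProbabilityMeasure μ] {g V : Ω → ℝ}
    (hg : StronglyMeasurable[m] g) (hgV : Integrable (g * V) μ) (hV : Integrable V μ) :
    ∫ ω, g ω * V ω ∂μ = ∫ ω, g ω * (μ[V|m]) ω ∂μ := by
  have h1 := condExp_mul_of_stronglyMeasurable_left hg hgV hV
  have h2 : ∫ ω, (μ[g * V|m]) ω ∂μ = ∫ ω, (g * V) ω ∂μ :=
    integral_condExp (m₀ := mΩ) (μ := μ) (f := g * V) hm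
  calc ∫ ω, g ω * V ω ∂μ = ∫ ω, (μ[g * V|m]) ω ∂μ := h2.symm
    _ = ∫ ω, g ω * (μ[V|m]) ω ∂μ := integral_congr_ae h1

lemma key_cell_identity {Ω : Type*} {W : Ω → ℝ × ℝ} {Z1 : Ω → ℝ}
    {m' mW : MeasurableSpace Ω} [mΩ : MeasurableSpace Ω] [StandardBorelSpace Ω] [Nonempty Ω]
    (hmW : mW = MeasurableSpace.comap W Prod.instMeasurableSpace)
    (hle : m' ≤ mΩ) (μ : Measure Ω) [IsProbabilityMeasure μ]
    (hW : Measurable W) (hZ1 : Measurable Z1)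
    (hunconf : CondIndepFun m' hle W Z1 μ)
    {V : Ω → ℝ} (hVW : Measurable[mW] V) (hVint : Integrable V μ)
    (b : ℝ) {C : Set Ω} (hCm' : MeasurableSet[m'] C) :
    ∫ ω in Z1 ⁻¹' {b} ∩ C, V ω ∂μ = ∫ ω in Z1 ⁻¹' {b} ∩ C, (μ[V|m']) ω ∂μ := by
  have hmWle : mW ≤ mΩ := by rw [hmW]; exact hW.comap_le
  set B : Set Ω := Z1 ⁻¹' {b} with hBdef
  have hBmeas : MeasurableSet B := hZ1 (measurableSet_singleton b)
  have hCmeas : MeasurableSet C := hle C hCm'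
  set p : Ω → ℝ := μ[B.indicator (fun _ => (1:ℝ)) | m'] with hpdef
  have hp_sm : StronglyMeasurable[m'] p := stronglyMeasurable_condExp
  have hp0 : 0 ≤ᵐ[μ] p :=
    condExp_nonneg (Filter.Eventually.of_forall fun ω =>
      Set.indicator_nonneg (fun _ _ => zero_le_one) ω)
  have hp1 : p ≤ᵐ[μ] fun _ => (1:ℝ) := by
    have h := condExp_mono (μ := μ) (m := m')
      ((integrable_const (1:ℝ)).indicator hBmeas) (integrable_const (1:ℝ))
      (Filter.Eventually.of_forall (Set.indicator_le_self' (fun _ _ => zero_le_one)))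
    have hc : μ[(fun _ => (1:ℝ)) | m'] = fun _ => (1:ℝ) := condExp_const (μ := μ) hle (1:ℝ)
    exact hc ▸ h
  have hp_bdd : ∀ᵐ ω ∂μ, ‖p ω‖ ≤ 1 := by
    filter_upwards [hp0, hp1] with ω h0 h1
    simp only [Pi.zero_apply] at h0
    rw [Real.norm_eq_abs, abs_le]; exact ⟨by linarith, h1⟩
  -- conditional independence fact
  have hInd : ∀ s : Set (ℝ × ℝ), MeasurableSet s →
      μ[(W ⁻¹' s ∩ B).indicator (fun _ => (1:ℝ)) | m']
        =ᵐ[μ] fun ω => (μ[(W ⁻¹' s).indicator (fun _ => (1:ℝ)) | m']) ω * p ω := by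
    intro s hs
    exact (condIndepFun_iff_condExp_inter_preimage_eq_mul hW hZ1).mp hunconf
      s {b} hs (measurableSet_singleton b)
  -- the indicator-weight function
  set gC : Ω → ℝ := C.indicator p with hgCdef
  have hgC_sm : StronglyMeasurable[m'] gC := hp_sm.indicator hCm'
  have hgC_aesm : AEStronglyMeasurable gC μ := (hgC_sm.mono hle).aestronglyMeasurable
  have hgC_bdd : ∀ᵐ ω ∂μ, ‖gC ω‖ ≤ 1 := by
    filter_upwards [hp_bdd] with ω h
    by_cases hω : ω ∈ C
    · simpa [hgCdef, Set.indicator_of_mem, hω] using h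
    · simp [hgCdef, Set.indicator_of_notMem, hω]
  -- the key real-integral identity
  have keyReal : ∀ s : Set (ℝ × ℝ), MeasurableSet s →
      (μ (W ⁻¹' s ∩ (B ∩ C))).toReal = ∫ ω in W ⁻¹' s ∩ C, p ω ∂μ := by
    intro s hs
    have ht : MeasurableSet (W ⁻¹' s) := hW hs
    set t : Set Ω := W ⁻¹' s with htdef
    have h1t_int : Integrable (t.indicator (fun _ => (1:ℝ))) μ :=
      (integrable_const (1:ℝ)).indicator ht
    have step_a : (μ (t ∩ (B ∩ C))).toReal
        = ∫ ω in C, (t ∩ B).indicator (fun _ => (1:ℝ)) ω ∂μ := by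
      rw [setIntegral_indicator (ht.inter hBmeas), setIntegral_const]
      have : C ∩ (t ∩ B) = t ∩ (B ∩ C) := by ext ω; simp only [Set.mem_inter_iff]; tauto
      rw [this, smul_eq_mul, mul_one]
      rfl
    have step_b : ∫ ω in C, (t ∩ B).indicator (fun _ => (1:ℝ)) ω ∂μ
        = ∫ ω in C, (μ[(t ∩ B).indicator (fun _ => (1:ℝ)) | m']) ω ∂μ :=
      (setIntegral_condExp hle ((integrable_const (1:ℝ)).indicator (ht.inter hBmeas)) hCm').symm
    have step_c : ∫ ω in C, (μ[(t ∩ B).indicator (fun _ => (1:ℝ)) | m']) ω ∂μ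
        = ∫ ω in C, (μ[t.indicator (fun _ => (1:ℝ)) | m']) ω * p ω ∂μ :=
      setIntegral_congr_ae hCmeas ((hInd s hs).mono fun ω hω _ => hω)
    have step_d : ∫ ω in C, (μ[t.indicator (fun _ => (1:ℝ)) | m']) ω * p ω ∂μ
        = ∫ ω, gC ω * (μ[t.indicator (fun _ => (1:ℝ)) | m']) ω ∂μ := by
      rw [← integral_indicator hCmeas]
      congr 1; funext ω
      by_cases hω : ω ∈ C
      · simp [hgCdef, Set.indicator_of_mem, hω, mul_comm]
      · simp [hgCdef, Set.indicator_of_notMem, hω]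
    have step_e : ∫ ω, gC ω * (μ[t.indicator (fun _ => (1:ℝ)) | m']) ω ∂μ
        = ∫ ω, gC ω * t.indicator (fun _ => (1:ℝ)) ω ∂μ := by
      refine (pullout_integral hle μ hgC_sm ?_ h1t_int).symm
      have := h1t_int.bdd_mul hgC_aesm hgC_bdd
      exact this
    have step_f : ∫ ω, gC ω * t.indicator (fun _ => (1:ℝ)) ω ∂μ
        = ∫ ω in t ∩ C, p ω ∂μ := by
      rw [← integral_indicator (ht.inter hCmeas)]
      congr 1; funext ω
      by_cases h1 : ω ∈ t <;> by_cases h2 : ω ∈ C <;>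
        simp [hgCdef, Set.indicator_apply, h1, h2]
    rw [step_a, step_b, step_c, step_d, step_e, step_f]
  -- two measures agreeing on σ(W)
  set ν₁ : Measure Ω := μ.restrict (B ∩ C) with hν₁def
  set ν₂ : Measure Ω := (μ.restrict C).withDensity (fun ω => ENNReal.ofReal (p ω)) with hν₂def
  have h_meas_eq : ∀ t : Set Ω, MeasurableSet[mW] t → ν₁ t = ν₂ t := by
    intro t ht
    rw [hmW] at ht
    obtain ⟨s, hs, rfl⟩ := ht
    have htm : MeasurableSet (W ⁻¹' s) := hW hs
    have e1 : ν₁ (W ⁻¹' s) = μ (W ⁻¹' s ∩ (B ∩ C)) := Measure.restrict_apply htm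
    have e2 : ν₂ (W ⁻¹' s) = ∫⁻ ω in W ⁻¹' s ∩ C, ENNReal.ofReal (p ω) ∂μ := by
      rw [hν₂def, withDensity_apply _ htm, Measure.restrict_restrict htm]
    have e3 : ∫⁻ ω in W ⁻¹' s ∩ C, ENNReal.ofReal (p ω) ∂μ
        = ENNReal.ofReal (∫ ω in W ⁻¹' s ∩ C, p ω ∂μ) :=
      (ofReal_integral_eq_lintegral_ofReal integrable_condExp.integrableOn
        (ae_restrict_of_ae hp0)).symm
    rw [e1, e2, e3, ← keyReal s hs, ENNReal.ofReal_toReal (measure_ne_top μ _)]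
  have hmtrim : ν₁.trim hmWle = ν₂.trim hmWle := by
    refine @Measure.ext Ω mW _ _ fun t ht => ?_
    rw [trim_measurableSet_eq hmWle ht, trim_measurableSet_eq hmWle ht, h_meas_eq t ht]
  have hVsm : StronglyMeasurable[mW] V := hVW.stronglyMeasurable
  have hνint : ∫ ω, V ω ∂ν₁ = ∫ ω, V ω ∂ν₂ := by
    calc ∫ ω, V ω ∂ν₁ = ∫ ω, V ω ∂(ν₁.trim hmWle) := integral_trim hmWle hVsm
      _ = ∫ ω, V ω ∂(ν₂.trim hmWle) := by rw [hmtrim]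
      _ = ∫ ω, V ω ∂ν₂ := (integral_trim hmWle hVsm).symm
  -- compute ∫ V ∂ν₂
  have hpnn_meas : Measurable fun ω => (p ω).toNNReal :=
    ((hp_sm.mono hle).measurable).real_toNNReal
  have hν₂V : ∫ ω, V ω ∂ν₂ = ∫ ω in C, p ω * V ω ∂μ := by
    have hcoe : ν₂ = (μ.restrict C).withDensity (fun ω => ((p ω).toNNReal : ℝ≥0∞)) := rfl
    rw [hcoe, integral_withDensity_eq_integral_smul hpnn_meas V]
    refine integral_congr_ae ?_
    filter_upwards [ae_restrict_of_ae hp0] with ω h0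
    simp only [Pi.zero_apply] at h0
    rw [NNReal.smul_def, Real.coe_toNNReal _ h0, smul_eq_mul]
  have hCpV : ∫ ω in C, p ω * V ω ∂μ = ∫ ω, gC ω * V ω ∂μ := by
    rw [← integral_indicator hCmeas]
    congr 1; funext ω
    by_cases hω : ω ∈ C <;> simp [hgCdef, Set.indicator_apply, hω]
  have hpullV : ∫ ω, gC ω * V ω ∂μ = ∫ ω, gC ω * (μ[V|m']) ω ∂μ :=
    pullout_integral hle μ hgC_sm (hVint.bdd_mul hgC_aesm hgC_bdd) hVint
  -- the right-hand side
  set h' : Ω → ℝ := C.indicator (μ[V|m']) with hh'def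
  have hh'_sm : StronglyMeasurable[m'] h' := stronglyMeasurable_condExp.indicator hCm'
  have hh'_int : Integrable h' μ := integrable_condExp.indicator hCmeas
  have h1B_int : Integrable (B.indicator (fun _ => (1:ℝ))) μ :=
    (integrable_const (1:ℝ)).indicator hBmeas
  have hh'1B_int : Integrable (h' * B.indicator (fun _ => (1:ℝ))) μ := by
    have h1B_bdd : ∀ᵐ ω ∂μ, ‖B.indicator (fun _ => (1:ℝ)) ω‖ ≤ 1 := by
      filter_upwards with ω
      by_cases hω : ω ∈ B <;> simp [Set.indicator_apply, hω]
    have := hh'_int.bdd_mul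
      ((stronglyMeasurable_const.indicator hBmeas :
        StronglyMeasurable (B.indicator (fun _ => (1:ℝ)))).aestronglyMeasurable) h1B_bdd
    exact this.congr (Filter.Eventually.of_forall fun ω => mul_comm _ _)
  have hRHS : ∫ ω in B ∩ C, (μ[V|m']) ω ∂μ = ∫ ω, h' ω * p ω ∂μ := by
    have e1 : ∫ ω in B ∩ C, (μ[V|m']) ω ∂μ
        = ∫ ω, h' ω * B.indicator (fun _ => (1:ℝ)) ω ∂μ := by
      rw [← integral_indicator (hBmeas.inter hCmeas)]
      congr 1; funext ω
      by_cases h1 : ω ∈ B <;> by_cases h2 : ω ∈ C <;>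
        simp [hh'def, Set.indicator_apply, h1, h2]
    rw [e1, pullout_integral hle μ hh'_sm hh'1B_int h1B_int]
  have hfinal : ∫ ω, gC ω * (μ[V|m']) ω ∂μ = ∫ ω, h' ω * p ω ∂μ := by
    congr 1; funext ω
    by_cases hω : ω ∈ C <;>
      simp [hgCdef, hh'def, Set.indicator_apply, hω, mul_comm]
  calc ∫ ω in B ∩ C, V ω ∂μ = ∫ ω, V ω ∂ν₁ := rfl
    _ = ∫ ω, V ω ∂ν₂ := hνint
    _ = ∫ ω in C, p ω * V ω ∂μ := hν₂V
    _ = ∫ ω, gC ω * V ω ∂μ := hCpV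
    _ = ∫ ω, gC ω * (μ[V|m']) ω ∂μ := hpullV
    _ = ∫ ω, h' ω * p ω ∂μ := hfinal
    _ = ∫ ω in B ∩ C, (μ[V|m']) ω ∂μ := hRHS.symm

/-- under consistency, unconfoundedness, exclusion restriction for both potential
outcomes, and positivity of the two relevant cells, the differential-effect contrast satisfies
`μ1 := E[Y|Z1=1,Z2=0] − E[Y|Z1=0,Z2=1] = τ + h(1,0) − h(0,1)`, where `τ = E[Y(1) − Y(0)]` and
`h(a,b) = E[f_a(X,U) | Z1=a, Z2=b]` with `f_a(X,U) = E[Y(a)|X,U] − E[Y(a)]`. -/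
theorem diffEffect_identity
    {Ω : Type*} [mΩ : MeasurableSpace Ω] [StandardBorelSpace Ω] [Nonempty Ω]
    (μ : Measure Ω) [IsProbabilityMeasure μ]
    (Z1 Z2 X U Y1 Y0 Y : Ω → ℝ)
    (hZ1 : Measurable Z1) (hZ2 : Measurable Z2) (hX : Measurable X) (hU : Measurable U)
    (hY1m : Measurable Y1) (hY0m : Measurable Y0)
    (hZ1bin : ∀ ω, Z1 ω = 0 ∨ Z1 ω = 1) (hZ2bin : ∀ ω, Z2 ω = 0 ∨ Z2 ω = 1)
    (hY1int : Integrable Y1 μ) (hY0int : Integrable Y0 μ)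
    -- consistency
    (hcons : ∀ ω, Y ω = Z1 ω * Y1 ω + (1 - Z1 ω) * Y0 ω)
    (hle : sigma3 Z2 X U ≤ mΩ)
    -- unconfoundedness: {Y(1), Y(0)} ⫫ Z1 | X, Z2, U
    (hunconf : CondIndepFun (sigma3 Z2 X U) hle (fun ω => (Y1 ω, Y0 ω)) Z1 μ)
    -- exclusion restriction for both potential outcomes
    (hexcl1 : μ[Y1 | sigma3 Z2 X U] =ᵐ[μ] μ[Y1 | sigma2 X U])
    (hexcl0 : μ[Y0 | sigma3 Z2 X U] =ᵐ[μ] μ[Y0 | sigma2 X U])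
    -- positivity: P(Z1=1,Z2=0) > 0 and P(Z1=0,Z2=1) > 0
    (hA10 : 0 < μ {ω | Z1 ω = 1 ∧ Z2 ω = 0}) (hA01 : 0 < μ {ω | Z1 ω = 0 ∧ Z2 ω = 1}) :
    condMeanOn μ {ω | Z1 ω = 1 ∧ Z2 ω = 0} Y - condMeanOn μ {ω | Z1 ω = 0 ∧ Z2 ω = 1} Y
      = (∫ ω, (Y1 ω - Y0 ω) ∂μ)
        + condMeanOn μ {ω | Z1 ω = 1 ∧ Z2 ω = 0}
            (fun ω => (μ[Y1 | sigma2 X U]) ω - ∫ ω', Y1 ω' ∂μ)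
        - condMeanOn μ {ω | Z1 ω = 0 ∧ Z2 ω = 1}
            (fun ω => (μ[Y0 | sigma2 X U]) ω - ∫ ω', Y0 ω' ∂μ) := by
  have hW : Measurable fun ω => (Y1 ω, Y0 ω) := hY1m.prodMk hY0m
  have hG'le : sigma2 X U ≤ sigma3 Z2 X U :=
    sup_le (le_sup_of_le_left le_sup_right) le_sup_right
  have hY1W : Measurable[MeasurableSpace.comap (fun ω => (Y1 ω, Y0 ω)) inferInstance] Y1 :=
    measurable_fst.comp (Measurable.of_comap_le le_rfl)
  have hY0W : Measurable[MeasurableSpace.comap (fun ω => (Y1 ω, Y0 ω)) inferInstance] Y0 :=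
    measurable_snd.comp (Measurable.of_comap_le le_rfl)
  have hC0 : MeasurableSet[sigma3 Z2 X U] (Z2 ⁻¹' {(0:ℝ)}) :=
    (le_sup_of_le_left le_sup_left :
      MeasurableSpace.comap Z2 inferInstance ≤ sigma3 Z2 X U) _
      ⟨{0}, measurableSet_singleton 0, rfl⟩
  have hC1 : MeasurableSet[sigma3 Z2 X U] (Z2 ⁻¹' {(1:ℝ)}) :=
    (le_sup_of_le_left le_sup_left :
      MeasurableSpace.comap Z2 inferInstance ≤ sigma3 Z2 X U) _
      ⟨{1}, measurableSet_singleton 1, rfl⟩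
  have hA10set : {ω | Z1 ω = 1 ∧ Z2 ω = 0} = Z1 ⁻¹' {(1:ℝ)} ∩ Z2 ⁻¹' {(0:ℝ)} := rfl
  have hA01set : {ω | Z1 ω = 0 ∧ Z2 ω = 1} = Z1 ⁻¹' {(0:ℝ)} ∩ Z2 ⁻¹' {(1:ℝ)} := rfl
  have hA10meas : MeasurableSet {ω | Z1 ω = 1 ∧ Z2 ω = 0} := by
    rw [hA10set]
    exact (hZ1 (measurableSet_singleton 1)).inter (hZ2 (measurableSet_singleton 0))
  have hA01meas : MeasurableSet {ω | Z1 ω = 0 ∧ Z2 ω = 1} := by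
    rw [hA01set]
    exact (hZ1 (measurableSet_singleton 0)).inter (hZ2 (measurableSet_singleton 1))
  -- numerator identities
  have e_num1 : ∫ ω in {ω | Z1 ω = 1 ∧ Z2 ω = 0}, Y ω ∂μ
      = ∫ ω in {ω | Z1 ω = 1 ∧ Z2 ω = 0}, (μ[Y1 | sigma2 X U]) ω ∂μ := by
    have s1 : ∫ ω in {ω | Z1 ω = 1 ∧ Z2 ω = 0}, Y ω ∂μ
        = ∫ ω in {ω | Z1 ω = 1 ∧ Z2 ω = 0}, Y1 ω ∂μ := by
      refine setIntegral_congr_fun hA10meas fun ω hω => ?_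
      rw [hcons ω, hω.1]; ring
    have s2 := key_cell_identity rfl hle μ hW hZ1 hunconf hY1W hY1int 1 hC0
    have s3 : ∫ ω in {ω | Z1 ω = 1 ∧ Z2 ω = 0}, (μ[Y1 | sigma3 Z2 X U]) ω ∂μ
        = ∫ ω in {ω | Z1 ω = 1 ∧ Z2 ω = 0}, (μ[Y1 | sigma2 X U]) ω ∂μ :=
      setIntegral_congr_ae hA10meas (hexcl1.mono fun ω h _ => h)
    rw [s1, hA10set, s2, ← hA10set, s3]
  have e_num0 : ∫ ω in {ω | Z1 ω = 0 ∧ Z2 ω = 1}, Y ω ∂μ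
      = ∫ ω in {ω | Z1 ω = 0 ∧ Z2 ω = 1}, (μ[Y0 | sigma2 X U]) ω ∂μ := by
    have s1 : ∫ ω in {ω | Z1 ω = 0 ∧ Z2 ω = 1}, Y ω ∂μ
        = ∫ ω in {ω | Z1 ω = 0 ∧ Z2 ω = 1}, Y0 ω ∂μ := by
      refine setIntegral_congr_fun hA01meas fun ω hω => ?_
      rw [hcons ω, hω.1]; ring
    have s2 := key_cell_identity rfl hle μ hW hZ1 hunconf hY0W hY0int 0 hC1
    have s3 : ∫ ω in {ω | Z1 ω = 0 ∧ Z2 ω = 1}, (μ[Y0 | sigma3 Z2 X U]) ω ∂μ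
        = ∫ ω in {ω | Z1 ω = 0 ∧ Z2 ω = 1}, (μ[Y0 | sigma2 X U]) ω ∂μ :=
      setIntegral_congr_ae hA01meas (hexcl0.mono fun ω h _ => h)
    rw [s1, hA01set, s2, ← hA01set, s3]
  -- subtracting the constants
  have e_sub1 : ∫ ω in {ω | Z1 ω = 1 ∧ Z2 ω = 0},
        ((μ[Y1 | sigma2 X U]) ω - ∫ ω', Y1 ω' ∂μ) ∂μ
      = ∫ ω in {ω | Z1 ω = 1 ∧ Z2 ω = 0}, (μ[Y1 | sigma2 X U]) ω ∂μ
        - (μ {ω | Z1 ω = 1 ∧ Z2 ω = 0}).toReal * ∫ ω', Y1 ω' ∂μ := by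
    rw [integral_sub integrable_condExp.integrableOn
      (integrableOn_const (C := ∫ ω', Y1 ω' ∂μ) (hs := measure_ne_top μ _)), setIntegral_const, smul_eq_mul]
    rfl
  have e_sub0 : ∫ ω in {ω | Z1 ω = 0 ∧ Z2 ω = 1},
        ((μ[Y0 | sigma2 X U]) ω - ∫ ω', Y0 ω' ∂μ) ∂μ
      = ∫ ω in {ω | Z1 ω = 0 ∧ Z2 ω = 1}, (μ[Y0 | sigma2 X U]) ω ∂μ
        - (μ {ω | Z1 ω = 0 ∧ Z2 ω = 1}).toReal * ∫ ω', Y0 ω' ∂μ := by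
    rw [integral_sub integrable_condExp.integrableOn
      (integrableOn_const (C := ∫ ω', Y0 ω' ∂μ) (hs := measure_ne_top μ _)), setIntegral_const, smul_eq_mul]
    rfl
  have e_tau : ∫ ω, (Y1 ω - Y0 ω) ∂μ = (∫ ω, Y1 ω ∂μ) - ∫ ω, Y0 ω ∂μ :=
    integral_sub hY1int hY0int
  have hm10 : (μ {ω | Z1 ω = 1 ∧ Z2 ω = 0}).toReal ≠ 0 :=
    (ENNReal.toReal_pos hA10.ne' (measure_ne_top μ _)).ne'
  have hm01 : (μ {ω | Z1 ω = 0 ∧ Z2 ω = 1}).toReal ≠ 0 :=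
    (ENNReal.toReal_pos hA01.ne' (measure_ne_top μ _)).ne'
  simp only [condMeanOn]
  rw [e_num1, e_num0, e_sub1, e_sub0, e_tau]
  field_simp
  ring
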